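/- arXiv:1805.12366 — 2 statements merged into one kernel-verified Lean document; each statement's English description precedes it below -/
import Mathlib

section
/- Vanishing lemma on the unit circle: Let v : S¹ → Mₙ(ℂ) be continuous and suppose the Hermitian part (v(z) + v(z)ᴴ)/2 is positive definite for every z ∈ S¹. Let (m₋, m₊) be a sectionally holomorphic pair such that m₊(z) → 0 as |z| → ∞ and m₊(z) = m₋(z) · v(z) for all z ∈ S¹. Then m₋ is identically zero on the closed unit disk and m₊ is identically zero on {|z| ≥ 1}. -/
open Complex Filter Matrix Metric
open scoped Topology Real ComplexOrder

lemma hasDerivAt_conj_conj {f : ℂ → ℂ} {f' z : ℂ} (h : HasDerivAt f f' ((starRingEnd ℂ) z)) :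
    HasDerivAt (fun w => (starRingEnd ℂ) (f ((starRingEnd ℂ) w))) ((starRingEnd ℂ) f') z := by
  rw [hasDerivAt_iff_tendsto_slope] at h ⊢
  have h1 : Tendsto (fun w => (starRingEnd ℂ) w) (𝓝[≠] z) (𝓝[≠] ((starRingEnd ℂ) z)) := by
    rw [tendsto_nhdsWithin_iff]
    constructor
    · exact (Complex.continuous_conj.tendsto z).mono_left nhdsWithin_le_nhds
    · filter_upwards [self_mem_nhdsWithin] with w hw
      simpa using fun hc => hw ((starRingEnd ℂ).injective hc)
  have h2 := (Complex.continuous_conj.tendsto f').comp (h.comp h1)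
  refine h2.congr (fun w => ?_)
  simp only [Function.comp_apply, slope_def_field]
  simp [map_div₀, map_sub]
lemma quad_identity {n : ℕ} (a : Fin n → ℂ) (V : Matrix (Fin n) (Fin n) ℂ) :
    (∑ k, a k * (starRingEnd ℂ) (∑ l, a l * V l k)) +
      (starRingEnd ℂ) (∑ k, a k * (starRingEnd ℂ) (∑ l, a l * V l k)) =
    star (fun k => (starRingEnd ℂ) (a k)) ⬝ᵥ ((V + Vᴴ) *ᵥ (fun k => (starRingEnd ℂ) (a k))) := by
  simp only [dotProduct, Matrix.mulVec, Matrix.add_apply, Matrix.conjTranspose_apply,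
    Pi.star_apply, map_sum, _root_.map_mul, Complex.star_def, Complex.conj_conj, Finset.mul_sum, Finset.sum_mul,
    add_mul, mul_add, Finset.sum_add_distrib]
  rw [add_comm]
  congr 1
  · rw [Finset.sum_comm]
    exact Finset.sum_congr rfl fun k _ => Finset.sum_congr rfl fun l _ => by ring
  · exact Finset.sum_congr rfl fun k _ => Finset.sum_congr rfl fun l _ => by ring

lemma periodic_nonneg_zero_integral {F : ℝ → ℝ} (hc : Continuous F)
    (hp : Function.Periodic F (2 * π)) (h0 : ∀ θ, 0 ≤ F θ)
    (hI : ∫ θ in (0:ℝ)..(2 * π), F θ = 0) : ∀ θ, F θ = 0 := by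
  intro θ₀
  by_contra hne
  have hpos : 0 < F θ₀ := lt_of_le_of_ne (h0 θ₀) (Ne.symm hne)
  have h2 : ∫ θ in (θ₀ - π)..(θ₀ - π + 2 * π), F θ = 0 := by
    rw [hp.intervalIntegral_add_eq (θ₀ - π) 0]
    simpa using hI
  have h3 : 0 < ∫ θ in (θ₀ - π)..(θ₀ - π + 2 * π), F θ :=
    intervalIntegral.integral_pos (by linarith [Real.pi_pos]) hc.continuousOn
      (fun x _ => h0 x) ⟨θ₀, ⟨by linarith [Real.pi_pos], by linarith [Real.pi_pos]⟩, hpos⟩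
  linarith

lemma tendsto_abs_inv_atTop : Tendsto (fun z : ℂ => ‖z‖⁻¹) (𝓝[≠] (0:ℂ)) atTop := by
  have h1 : Tendsto (fun z : ℂ => ‖z‖) (𝓝[≠] (0:ℂ)) (𝓝[>] 0) := by
    rw [tendsto_nhdsWithin_iff]
    constructor
    · simpa using (continuous_norm.tendsto (0:ℂ)).mono_left nhdsWithin_le_nhds
    · filter_upwards [self_mem_nhdsWithin] with z hz
      exact norm_pos_iff.mpr hz
  exact tendsto_inv_nhdsGT_zero.comp h1

lemma diffContOnCl_of_punctured {h : ℂ → ℂ}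
    (hd : DifferentiableOn ℂ h (ball (0:ℂ) 1 \ {0}))
    (hc : ContinuousOn h (closedBall (0:ℂ) 1 \ {0}))
    (h0 : ContinuousAt h 0) :
    DiffContOnCl ℂ h (ball (0:ℂ) 1) := by
  constructor
  · rw [← Complex.differentiableOn_compl_singleton_and_continuousAt_iff
      (Metric.ball_mem_nhds (0:ℂ) one_pos)]
    exact ⟨hd, h0⟩
  · rw [closure_ball (0:ℂ) one_ne_zero]
    intro z hz
    by_cases hz0 : z = 0
    · subst hz0; exact h0.continuousWithinAt
    · refine (hc z ⟨hz, hz0⟩).mono_of_mem_nhdsWithin ?_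
      rw [Set.diff_eq]
      exact inter_mem_nhdsWithin _ (isOpen_compl_singleton.mem_nhds hz0)

lemma zero_on_closedBall_of_zero_on_sphere {f : ℂ → ℂ}
    (hf : DiffContOnCl ℂ f (ball (0:ℂ) 1))
    (hb : ∀ z : ℂ, ‖z‖ = 1 → f z = 0) :
    ∀ z : ℂ, ‖z‖ ≤ 1 → f z = 0 := by
  intro z hz
  have hcl : z ∈ closure (ball (0:ℂ) 1) := by
    rw [closure_ball (0:ℂ) one_ne_zero]
    simpa [Complex.dist_eq] using hz
  have hle := Complex.norm_le_of_forall_mem_frontier_norm_le isBounded_ball hf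
    (C := 0) (fun w hw => ?_) hcl
  · simpa using norm_le_zero_iff.mp hle
  · rw [frontier_ball (0:ℂ) one_ne_zero] at hw
    have : ‖w‖ = 1 := by simpa [Complex.dist_eq] using hw
    simp [hb w this]

/-- A pair `(m₋, m₊)` of matrix-valued functions is sectionally holomorphic if
`m₋` is continuous on the closed unit disk and holomorphic on the open unit disk,
and `m₊` is continuous on `{|z| ≥ 1}` and holomorphic on `{|z| > 1}`. -/
def SectHoloPair (n : ℕ) (mm mp : ℂ → Matrix (Fin n) (Fin n) ℂ) : Prop :=
  ContinuousOn mm {z : ℂ | ‖z‖ ≤ 1} ∧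
  (∀ i j, DifferentiableOn ℂ (fun z => mm z i j) {z : ℂ | ‖z‖ < 1}) ∧
  ContinuousOn mp {z : ℂ | 1 ≤ ‖z‖} ∧
  (∀ i j, DifferentiableOn ℂ (fun z => mp z i j) {z : ℂ | 1 < ‖z‖})

theorem vanishing_lemma_unit_circle
    (n : ℕ) (v : ℂ → Matrix (Fin n) (Fin n) ℂ)
    (hv_cont : ContinuousOn v {z : ℂ | ‖z‖ = 1})
    (hv_pos : ∀ z : ℂ, ‖z‖ = 1 →
      (((1 : ℂ) / 2) • (v z + (v z)ᴴ)).PosDef)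
    (mm mp : ℂ → Matrix (Fin n) (Fin n) ℂ)
    (hpair : SectHoloPair n mm mp)
    (hlim : Tendsto mp (Filter.comap (fun z : ℂ => ‖z‖) Filter.atTop) (nhds 0))
    (hjump : ∀ z : ℂ, ‖z‖ = 1 → mp z = mm z * v z) :
    (∀ z : ℂ, ‖z‖ ≤ 1 → mm z = 0) ∧
    (∀ z : ℂ, 1 ≤ ‖z‖ → mp z = 0) := by
  obtain ⟨hmmc, hmmd, hmpc, hmpd⟩ := hpair
  have hset_le : {z : ℂ | ‖z‖ ≤ 1} = closedBall (0:ℂ) 1 := by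
    ext z; simp [Complex.dist_eq]
  have hset_lt : {z : ℂ | ‖z‖ < 1} = ball (0:ℂ) 1 := by
    ext z; simp [Complex.dist_eq]
  have isOpen_lt1 : IsOpen {z : ℂ | ‖z‖ < 1} :=
    isOpen_lt continuous_norm continuous_const
  have isOpen_gt1 : IsOpen {z : ℂ | 1 < ‖z‖} :=
    isOpen_lt continuous_const continuous_norm
  have hmme : ∀ i k : Fin n, ContinuousOn (fun z => mm z i k) {z : ℂ | ‖z‖ ≤ 1} :=
    fun i k => by exact ((continuous_apply k).comp (continuous_apply i)).comp_continuousOn hmmc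
  have hmpe : ∀ i k : Fin n, ContinuousOn (fun z => mp z i k) {z : ℂ | 1 ≤ ‖z‖} :=
    fun i k => by exact ((continuous_apply k).comp (continuous_apply i)).comp_continuousOn hmpc
  -- Step 1: mm vanishes on the circle
  have key : ∀ (i : Fin n) (z : ℂ), ‖z‖ = 1 → ∀ k, mm z i k = 0 := by
    intro i
    set g : ℂ → ℂ := fun z => if z = 0 then 0
      else ∑ k, mm z i k * (starRingEnd ℂ) (mp ((starRingEnd ℂ) z)⁻¹ i k) with hgdef
    have hg0 : g 0 = 0 := if_pos rfl
    have hinvmem : ∀ w : ℂ, w ≠ 0 → ‖w‖ ≤ 1 →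
        1 ≤ ‖((starRingEnd ℂ) w)⁻¹‖ := by
      intro w hw hle
      rw [norm_inv, Complex.norm_conj]
      exact (one_le_inv₀ (norm_pos_iff.mpr hw)).mpr hle
    -- continuity of g away from 0
    have hgc : ContinuousOn g ({z : ℂ | ‖z‖ ≤ 1} \ {0}) := by
      have hc0 : ContinuousOn
          (fun z => ∑ k, mm z i k * (starRingEnd ℂ) (mp ((starRingEnd ℂ) z)⁻¹ i k))
          ({z : ℂ | ‖z‖ ≤ 1} \ {0}) := by
        refine continuousOn_finset_sum _ fun k _ => ?_
        refine ((hmme i k).mono Set.diff_subset).mul ?_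
        refine Complex.continuous_conj.comp_continuousOn ?_
        refine (hmpe i k).comp ?_ ?_
        · refine ContinuousOn.inv₀ (Complex.continuous_conj.continuousOn) fun w hw => ?_
          simpa using (hw.2 : w ∉ ({0} : Set ℂ))
        · intro w hw
          exact hinvmem w hw.2 hw.1
      exact hc0.congr fun w hw => if_neg hw.2
    -- continuity of g at 0
    have htend_inner : Tendsto (fun z : ℂ => mp ((starRingEnd ℂ) z)⁻¹) (𝓝[≠] (0:ℂ)) (𝓝 0) := by
      refine hlim.comp ?_
      rw [tendsto_comap_iff]
      refine tendsto_abs_inv_atTop.congr fun w => ?_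
      simp [Function.comp, map_inv₀]
    have hmem0 : {z : ℂ | ‖z‖ ≤ 1} ∈ 𝓝 (0:ℂ) :=
      mem_of_superset (isOpen_lt1.mem_nhds (by simp)) fun z hz => by
        simp only [Set.mem_setOf_eq] at hz ⊢
        exact le_of_lt hz
    have hgat0 : ContinuousAt g 0 := by
      have hterm : ∀ k : Fin n, Tendsto
          (fun z : ℂ => mm z i k * (starRingEnd ℂ) (mp ((starRingEnd ℂ) z)⁻¹ i k))
          (𝓝[≠] (0:ℂ)) (𝓝 0) := by
        intro k
        have h1 : Tendsto (fun z : ℂ => mm z i k) (𝓝[≠] (0:ℂ)) (𝓝 (mm 0 i k)) :=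
          (((hmme i k).continuousAt hmem0).tendsto).mono_left nhdsWithin_le_nhds
        have h3 : Tendsto (fun M : Matrix (Fin n) (Fin n) ℂ => M i k) (𝓝 0) (𝓝 0) := by
          exact ((continuous_apply k).comp (continuous_apply i)).tendsto
            (0 : Matrix (Fin n) (Fin n) ℂ)
        have h2 : Tendsto (fun z : ℂ => (starRingEnd ℂ) (mp ((starRingEnd ℂ) z)⁻¹ i k))
            (𝓝[≠] (0:ℂ)) (𝓝 0) := by
          have := (Complex.continuous_conj.tendsto 0).comp (h3.comp htend_inner)
          simpa [Function.comp_def] using this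
        simpa using h1.mul h2
      have hsumt : Tendsto
          (fun z : ℂ => ∑ k, mm z i k * (starRingEnd ℂ) (mp ((starRingEnd ℂ) z)⁻¹ i k))
          (𝓝[≠] (0:ℂ)) (𝓝 0) := by
        have := tendsto_finset_sum Finset.univ (fun k (_ : k ∈ Finset.univ) => hterm k)
        simpa using this
      have hT : Tendsto g (𝓝[≠] (0:ℂ) ⊔ pure 0) (𝓝 (0:ℂ)) := by
        refine tendsto_sup.mpr ⟨?_, ?_⟩
        · refine hsumt.congr' ?_
          filter_upwards [self_mem_nhdsWithin] with w hw
          exact (if_neg hw).symm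
        · simpa [hg0] using tendsto_pure_nhds g 0
      rw [nhdsNE_sup_pure] at hT
      rw [ContinuousAt, hg0]
      exact hT
    -- differentiability of g on the punctured ball
    have hgd : DifferentiableOn ℂ g (ball (0:ℂ) 1 \ {0}) := by
      intro z hz
      obtain ⟨hzb, hz0'⟩ := hz
      have hz0 : z ≠ 0 := hz0'
      have hzlt : ‖z‖ < 1 := by simpa [Complex.dist_eq] using hzb
      have hsum : DifferentiableAt ℂ
          (fun z => ∑ k, mm z i k * (starRingEnd ℂ) (mp ((starRingEnd ℂ) z)⁻¹ i k)) z := by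
        refine DifferentiableAt.fun_sum fun k _ => DifferentiableAt.mul ?_ ?_
        · exact (hmmd i k).differentiableAt (isOpen_lt1.mem_nhds hzlt)
        · have hcz : (starRingEnd ℂ) z ≠ 0 := by simpa using hz0
          have habs : 1 < ‖((starRingEnd ℂ) z)⁻¹‖ := by
            rw [norm_inv, Complex.norm_conj]
            exact (one_lt_inv₀ (norm_pos_iff.mpr hz0)).mpr hzlt
          have hF : DifferentiableAt ℂ (fun w : ℂ => mp w⁻¹ i k) ((starRingEnd ℂ) z) := by
            have h1 : DifferentiableAt ℂ (fun w : ℂ => w⁻¹) ((starRingEnd ℂ) z) :=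
              differentiableAt_inv hcz
            have h2 : DifferentiableAt ℂ (fun u => mp u i k) (((starRingEnd ℂ) z)⁻¹) :=
              (hmpd i k).differentiableAt (isOpen_gt1.mem_nhds habs)
            exact h2.comp _ h1
          exact (hasDerivAt_conj_conj hF.hasDerivAt).differentiableAt
      have heq : g =ᶠ[𝓝 z]
          fun z => ∑ k, mm z i k * (starRingEnd ℂ) (mp ((starRingEnd ℂ) z)⁻¹ i k) := by
        filter_upwards [isOpen_compl_singleton.mem_nhds hz0] with u hu
        exact if_neg hu
      exact (hsum.congr_of_eventuallyEq heq).differentiableWithinAt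
    have hgdc : DiffContOnCl ℂ g (ball (0:ℂ) 1) := by
      refine diffContOnCl_of_punctured hgd ?_ hgat0
      rw [← hset_le]; exact hgc
    -- Cauchy integral formula
    have hCauchy := hgdc.circleIntegral_sub_inv_smul (mem_ball_self one_pos)
    have h4 : (∮ z in C((0:ℂ), 1), (z - 0)⁻¹ • g z)
        = ∫ θ in (0:ℝ)..(2 * π), I * g (circleMap 0 1 θ) := by
      simp only [circleIntegral, deriv_circleMap, smul_eq_mul]
      refine intervalIntegral.integral_congr fun θ _ => ?_
      have hne : circleMap 0 1 θ ≠ 0 := circleMap_ne_center one_ne_zero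
      field_simp
      ring
    have h5 : I * ∫ θ in (0:ℝ)..(2 * π), g (circleMap 0 1 θ) = 0 := by
      rw [← intervalIntegral.integral_const_mul, ← h4, hCauchy, hg0, smul_zero]
    have hint0 : ∫ θ in (0:ℝ)..(2 * π), g (circleMap 0 1 θ) = 0 :=
      (mul_eq_zero.mp h5).resolve_left I_ne_zero
    -- continuity of g ∘ circleMap
    have hgcont_cb : ContinuousOn g (closedBall (0:ℂ) 1) := by
      have := hgdc.continuousOn
      rwa [closure_ball (0:ℂ) one_ne_zero] at this
    have hmemS : ∀ θ : ℝ, circleMap 0 1 θ ∈ closedBall (0:ℂ) 1 := by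
      intro θ
      simp [Complex.dist_eq]
    have hGc : Continuous fun θ => g (circleMap 0 1 θ) :=
      hgcont_cb.comp_continuous (continuous_circleMap 0 1) hmemS
    -- real part
    set F : ℝ → ℝ := fun θ => (g (circleMap 0 1 θ)).re with hFdef
    have hFcont : Continuous F := Complex.continuous_re.comp hGc
    have hFint : ∫ θ in (0:ℝ)..(2 * π), F θ = 0 := by
      have hIcc := hGc.intervalIntegrable (μ := MeasureTheory.volume) (0:ℝ) (2 * π)
      have := Complex.reCLM.intervalIntegral_comp_comm hIcc
      simpa [hint0] using this
    have hFper : Function.Periodic F (2 * π) := by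
      intro θ
      simp only [hFdef]
      rw [periodic_circleMap 0 1 θ]
    -- the quadratic form identity on the circle
    have hquad : ∀ z : ℂ, ‖z‖ = 1 →
        ((g z).re : ℂ) = star (fun k => (starRingEnd ℂ) (mm z i k)) ⬝ᵥ
          ((((1:ℂ)/2) • (v z + (v z)ᴴ)) *ᵥ (fun k => (starRingEnd ℂ) (mm z i k))) := by
      intro z hz
      have hz0 : z ≠ 0 := by
        intro h; rw [h, norm_zero] at hz; exact absurd hz (by norm_num)
      have hconjinv : ((starRingEnd ℂ) z)⁻¹ = z := by
        have hmul : (starRingEnd ℂ) z * z = 1 := by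
          rw [mul_comm, Complex.mul_conj]
          rw [Complex.normSq_eq_norm_sq, hz]
          norm_num
        exact inv_eq_of_mul_eq_one_right hmul
      have hgz : g z = ∑ k, mm z i k * (starRingEnd ℂ) ((mm z * v z) i k) := by
        simp only [hgdef]
        rw [if_neg hz0, hconjinv, hjump z hz]
      have hsum : g z + (starRingEnd ℂ) (g z)
          = star (fun k => (starRingEnd ℂ) (mm z i k)) ⬝ᵥ
            ((v z + (v z)ᴴ) *ᵥ (fun k => (starRingEnd ℂ) (mm z i k))) := by
        rw [hgz]
        simpa only [Matrix.mul_apply] using quad_identity (fun k => mm z i k) (v z)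
      have h2re : ((g z).re : ℂ) = (g z + (starRingEnd ℂ) (g z)) / 2 := by
        rw [Complex.add_conj]
        push_cast
        ring
      rw [h2re, hsum, Matrix.smul_mulVec, dotProduct_smul, smul_eq_mul]
      ring
    -- nonnegativity of F
    have hFnn : ∀ θ : ℝ, 0 ≤ F θ := by
      intro θ
      set z := circleMap 0 1 θ with hzdef
      have hz : ‖z‖ = 1 := by simp [hzdef]
      have hq := hquad z hz
      rcases eq_or_ne (fun k => (starRingEnd ℂ) (mm z i k)) 0 with hx | hx
      · have h0' : ((g z).re : ℂ) = 0 := by rw [hq, hx]; simp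
        have : (g z).re = 0 := by exact_mod_cast h0'
        simp only [hFdef, ← hzdef, this]
        exact le_refl 0
      · have hpos := (hv_pos z hz).dotProduct_mulVec_pos hx
        rw [← hq] at hpos
        have : (0:ℝ) < (g z).re := by exact_mod_cast hpos
        exact le_of_lt this
    have hF0 : ∀ θ : ℝ, F θ = 0 := periodic_nonneg_zero_integral hFcont hFper hFnn hFint
    -- conclude on the circle
    intro z hz k
    have hcm : circleMap 0 1 (Complex.arg z) = z := by
      have := Complex.norm_mul_exp_arg_mul_I z
      rw [hz] at this
      simpa [circleMap] using this
    have hre : (g z).re = 0 := by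
      have h := hF0 (Complex.arg z)
      simp only [hFdef] at h
      rwa [hcm] at h
    have hzero : star (fun k => (starRingEnd ℂ) (mm z i k)) ⬝ᵥ
        ((((1:ℂ)/2) • (v z + (v z)ᴴ)) *ᵥ (fun k => (starRingEnd ℂ) (mm z i k))) = 0 := by
      rw [← hquad z hz, hre]
      simp
    have hx0 : (fun k => (starRingEnd ℂ) (mm z i k)) = 0 := by
      by_contra hx
      have hpos := (hv_pos z hz).dotProduct_mulVec_pos hx
      rw [hzero] at hpos
      exact lt_irrefl 0 hpos
    have := congrFun hx0 k
    simpa using this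
  -- Step 2: mm vanishes on the closed disk
  have hmm_zero : ∀ z : ℂ, ‖z‖ ≤ 1 → mm z = 0 := by
    intro z hz
    ext i k
    refine zero_on_closedBall_of_zero_on_sphere (f := fun z => mm z i k)
      ⟨?_, ?_⟩ (fun w hw => key i w hw k) z hz
    · rw [← hset_lt]; exact hmmd i k
    · rw [closure_ball (0:ℂ) one_ne_zero, ← hset_le]; exact hmme i k
  refine ⟨hmm_zero, ?_⟩
  -- Step 3: mp vanishes outside
  have hmp_circ : ∀ z : ℂ, ‖z‖ = 1 → mp z = 0 := by
    intro z hz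
    rw [hjump z hz, hmm_zero z (le_of_eq hz), Matrix.zero_mul]
  intro z hz
  have hz0 : z ≠ 0 := by
    intro h; rw [h, norm_zero] at hz; exact absurd hz (by norm_num)
  have habspos : (0:ℝ) < ‖z‖ := lt_of_lt_of_le one_pos hz
  ext i k
  have hinvmem : ∀ w : ℂ, w ≠ 0 → ‖w‖ ≤ 1 → 1 ≤ ‖w⁻¹‖ := by
    intro w hw hle
    rw [norm_inv]
    exact (one_le_inv₀ (norm_pos_iff.mpr hw)).mpr hle
  set h : ℂ → ℂ := fun w => if w = 0 then 0 else mp w⁻¹ i k with hhdef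
  have hat0 : ContinuousAt h 0 := by
    have htend : Tendsto (fun w : ℂ => mp w⁻¹) (𝓝[≠] (0:ℂ)) (𝓝 0) := by
      refine hlim.comp ?_
      rw [tendsto_comap_iff]
      refine tendsto_abs_inv_atTop.congr fun w => ?_
      simp [Function.comp, map_inv₀]
    have hE : Tendsto (fun w : ℂ => mp w⁻¹ i k) (𝓝[≠] (0:ℂ)) (𝓝 0) := by
      have h3 : Tendsto (fun M : Matrix (Fin n) (Fin n) ℂ => M i k) (𝓝 0) (𝓝 0) := by
        exact ((continuous_apply k).comp (continuous_apply i)).tendsto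
          (0 : Matrix (Fin n) (Fin n) ℂ)
      exact h3.comp htend
    have hh0 : h 0 = 0 := if_pos rfl
    have hT : Tendsto h (𝓝[≠] (0:ℂ) ⊔ pure 0) (𝓝 (0:ℂ)) := by
      refine tendsto_sup.mpr ⟨?_, ?_⟩
      · refine hE.congr' ?_
        filter_upwards [self_mem_nhdsWithin] with w hw
        exact (if_neg hw).symm
      · simpa [hh0] using tendsto_pure_nhds h 0
    rw [nhdsNE_sup_pure] at hT
    rw [ContinuousAt, hh0]
    exact hT
  have hdiff : DifferentiableOn ℂ h (ball (0:ℂ) 1 \ {0}) := by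
    intro w hw
    obtain ⟨hwb, hw0'⟩ := hw
    have hw0 : w ≠ 0 := hw0'
    have hwlt : ‖w‖ < 1 := by simpa [Complex.dist_eq] using hwb
    have hgt : 1 < ‖w⁻¹‖ := by
      rw [norm_inv]
      exact (one_lt_inv₀ (norm_pos_iff.mpr hw0)).mpr hwlt
    have hF : DifferentiableAt ℂ (fun w : ℂ => mp w⁻¹ i k) w := by
      have h1 : DifferentiableAt ℂ (fun w : ℂ => w⁻¹) w := differentiableAt_inv hw0
      have h2 : DifferentiableAt ℂ (fun u => mp u i k) w⁻¹ :=
        (hmpd i k).differentiableAt (isOpen_gt1.mem_nhds hgt)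
      exact h2.comp _ h1
    have heq : h =ᶠ[𝓝 w] fun w : ℂ => mp w⁻¹ i k := by
      filter_upwards [isOpen_compl_singleton.mem_nhds hw0] with u hu
      exact if_neg hu
    exact (hF.congr_of_eventuallyEq heq).differentiableWithinAt
  have hcont : ContinuousOn h (closedBall (0:ℂ) 1 \ {0}) := by
    have hc0 : ContinuousOn (fun w : ℂ => mp w⁻¹ i k) (closedBall (0:ℂ) 1 \ {0}) := by
      refine (hmpe i k).comp ?_ ?_
      · refine ContinuousOn.inv₀ continuousOn_id fun w hw => hw.2
      · intro w hw
        have hw0 : w ≠ 0 := hw.2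
        have hwle : ‖w‖ ≤ 1 := by
          have := hw.1; simpa [Complex.dist_eq] using this
        exact hinvmem w hw0 hwle
    exact hc0.congr fun w hw => if_neg hw.2
  have hdc : DiffContOnCl ℂ h (ball (0:ℂ) 1) := diffContOnCl_of_punctured hdiff hcont hat0
  have hbd : ∀ w : ℂ, ‖w‖ = 1 → h w = 0 := by
    intro w hw
    have hw0 : w ≠ 0 := by intro hc; rw [hc] at hw; simp at hw
    have habs : ‖w⁻¹‖ = 1 := by rw [norm_inv, hw]; norm_num
    have := hmp_circ w⁻¹ habs
    simp only [hhdef, if_neg hw0, this]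
    rfl
  have hzi : ‖z⁻¹‖ ≤ 1 := by
    rw [norm_inv]
    exact (inv_le_one₀ (lt_of_lt_of_le one_pos hz)).mpr hz
  have := zero_on_closedBall_of_zero_on_sphere hdc hbd z⁻¹ hzi
  have hzi0 : z⁻¹ ≠ 0 := inv_ne_zero hz0
  rw [hhdef] at this
  simp only [if_neg hzi0, inv_inv] at this
  rw [this]
  rfl
end

section
/- Uniqueness of partial indices on the circle: Let v : S¹ → Mₙ(ℂ) and suppose v admits two factorizations v(z) = a₋(z)⁻¹ · diag(z^{k₁}, …, z^{kₙ}) · a₊(z) = b₋(z)⁻¹ · diag(z^{l₁}, …, z^{lₙ}) · b₊(z) on S¹, where k₁ ≥ … ≥ kₙ and l₁ ≥ … ≥ lₙ are integers, (a₋, a₊) and (b₋, b₊) are sectionally holomorphic pairs whose determinants vanish nowhere on their closed domains, and a₋, b₋ converge to invertible matrices as |z| → ∞. Then kᵢ = lᵢ for every i = 1, …, n. -/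
open Complex Filter Matrix
open Metric

/-- `(mp, mm, h, k)` is a Riemann-Hilbert factorization of `v` on the unit circle:
`mp` is continuous on the closed unit disk, holomorphic inside, with nowhere
vanishing determinant; `mm` is continuous on `{|z| ≥ 1}`, holomorphic on
`{|z| > 1}`, with nowhere vanishing determinant, converging to the invertible
matrix `h` at infinity; and `v = mm⁻¹ ⬝ diag(z^{k i}) ⬝ mp` on the circle. -/
def IsRHFactorization (n : ℕ) (v : ℂ → Matrix (Fin n) (Fin n) ℂ)
    (mp mm : ℂ → Matrix (Fin n) (Fin n) ℂ) (h : Matrix (Fin n) (Fin n) ℂ)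
    (k : Fin n → ℤ) : Prop :=
  Antitone k ∧
  ContinuousOn mp {z : ℂ | ‖z‖ ≤ 1} ∧
  (∀ i j, DifferentiableOn ℂ (fun z => mp z i j) {z : ℂ | ‖z‖ < 1}) ∧
  (∀ z : ℂ, ‖z‖ ≤ 1 → (mp z).det ≠ 0) ∧
  ContinuousOn mm {z : ℂ | 1 ≤ ‖z‖} ∧
  (∀ i j, DifferentiableOn ℂ (fun z => mm z i j) {z : ℂ | 1 < ‖z‖}) ∧
  (∀ z : ℂ, 1 ≤ ‖z‖ → (mm z).det ≠ 0) ∧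
  Filter.Tendsto mm (Filter.comap (fun z : ℂ => ‖z‖) Filter.atTop) (nhds h) ∧ IsUnit h ∧
  (∀ z : ℂ, ‖z‖ = 1 →
    v z = (mm z)⁻¹ * Matrix.diagonal (fun i => z ^ (k i)) * mp z)


lemma diffOn_det {N : ℕ} {M : ℂ → Matrix (Fin N) (Fin N) ℂ} {s : Set ℂ}
    (h : ∀ i j, DifferentiableOn ℂ (fun z => M z i j) s) :
    DifferentiableOn ℂ (fun z => (M z).det) s := by
  simp only [Matrix.det_apply, Units.smul_def, zsmul_eq_mul]
  apply DifferentiableOn.fun_sum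
  intro σ _
  exact (differentiableOn_const _).mul
    (DifferentiableOn.fun_finsetProd (u := Finset.univ) (f := fun i z => M z (σ i) i)
      (fun i _ => h (σ i) i))

lemma diffOn_adj {N : ℕ} {M : ℂ → Matrix (Fin N) (Fin N) ℂ} {s : Set ℂ}
    (h : ∀ i j, DifferentiableOn ℂ (fun z => M z i j) s) (i j : Fin N) :
    DifferentiableOn ℂ (fun z => (M z).adjugate i j) s := by
  simp only [Matrix.adjugate_apply]
  apply diffOn_det
  intro a b
  simp only [Matrix.updateRow_apply]
  by_cases hab : a = j
  · simp [hab]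
  · simpa [hab] using h a b

lemma det_eq_zero_of_block {N : ℕ} (H : Matrix (Fin N) (Fin N) ℂ) (p : Fin N)
    (h0 : ∀ i j, i ≤ p → p ≤ j → H i j = 0) : H.det = 0 := by
  rw [Matrix.det_apply]
  apply Finset.sum_eq_zero
  intro σ _
  have hex : ∃ j, p ≤ j ∧ σ j ≤ p := by
    by_contra hc
    push_neg at hc
    set S : Finset (Fin N) := Finset.univ.filter (fun j => p ≤ j) with hS
    have hsub : S.image σ ⊆ S.erase p := by
      intro x hx
      simp only [Finset.mem_image, hS, Finset.mem_filter, Finset.mem_univ, true_and] at hx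
      obtain ⟨j, hj, rfl⟩ := hx
      exact Finset.mem_erase.mpr ⟨(hc j hj).ne', by
        simp only [hS, Finset.mem_filter, Finset.mem_univ, true_and]; exact (hc j hj).le⟩
    have hcard := Finset.card_le_card hsub
    rw [Finset.card_image_of_injective _ σ.injective, Finset.card_erase_of_mem
      (by simp [hS])] at hcard
    have hpos : 0 < S.card := Finset.card_pos.mpr ⟨p, by simp [hS]⟩
    omega
  obtain ⟨j, hj1, hj2⟩ := hex
  have hz : (∏ i, H (σ i) i) = 0 :=
    Finset.prod_eq_zero (Finset.mem_univ j) (h0 _ _ hj2 hj1)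
  rw [hz, smul_zero]


lemma glue_zero (f g : ℂ → ℂ) (c : ℂ)
    (hf : DiffContOnCl ℂ f (Metric.ball (0:ℂ) 1))
    (hgc : ContinuousOn g {z : ℂ | 1 ≤ ‖z‖})
    (hgd : ∀ z : ℂ, 1 < ‖z‖ → DifferentiableAt ℂ g z)
    (hgl : Tendsto g (Filter.comap (fun z : ℂ => ‖z‖) Filter.atTop) (nhds c))
    (heq : ∀ z : ℂ, ‖z‖ = 1 → f z = g z) : f 0 = c := by
  have habs : ∀ z : ℂ, ‖z‖ = ‖z‖ := fun z => rfl
  -- Cauchy formula on the unit circle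
  have h1 : (∮ z in C(0, 1), (z - 0)⁻¹ • f z) = (2 * Real.pi * I : ℂ) • f 0 :=
    hf.circleIntegral_sub_inv_smul (mem_ball_self one_pos)
  set F : ℂ → ℂ := fun z => z⁻¹ • g z with hF
  have h2 : (∮ z in C(0, 1), (z - 0)⁻¹ • f z) = ∮ z in C(0, 1), F z := by
    apply circleIntegral.integral_congr zero_le_one
    intro z hz
    have hz1 : ‖z‖ = 1 := by
      rw [habs]; exact mem_sphere_zero_iff_norm.mp hz
    simp only [hF, sub_zero, heq z hz1]
  -- the key estimate
  have key : ∀ ε : ℝ, 0 < ε → ‖f 0 - c‖ ≤ ε := by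
    intro ε hε
    have := Metric.tendsto_nhds.mp hgl ε hε
    rw [Filter.eventually_comap] at this
    obtain ⟨R₀, hR₀⟩ := eventually_atTop.mp this
    set R : ℝ := max 1 R₀ with hRdef
    have hR1 : (1:ℝ) ≤ R := le_max_left _ _
    have hR0 : (0:ℝ) < R := lt_of_lt_of_le one_pos hR1
    have hsphere : ∀ z : ℂ, z ∈ sphere (0:ℂ) R → ‖z‖ = R := by
      intro z hz; rw [habs]; exact mem_sphere_zero_iff_norm.mp hz
    have hzne : ∀ z : ℂ, z ∈ sphere (0:ℂ) R → z ≠ 0 := by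
      intro z hz h0
      rw [h0] at hz
      have h00 := hsphere 0 hz
      simp only [norm_zero] at h00
      linarith
    -- the annulus deformation
    have hmemgen : ∀ z : ℂ, z ∈ closedBall (0:ℂ) R \ ball (0:ℂ) 1 → 1 ≤ ‖z‖ := by
      intro z hz
      rw [habs]
      exact not_lt.mp (fun h => hz.2 (mem_ball_zero_iff.mpr h))
    have hFc : ContinuousOn F (closedBall (0:ℂ) R \ ball (0:ℂ) 1) := by
      apply ContinuousOn.fun_smul
      · apply ContinuousOn.inv₀ continuousOn_id
        intro z hz h0
        rw [id_eq] at h0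
        rw [h0] at hz
        exact absurd (hmemgen 0 hz) (by simp)
      · exact hgc.mono fun z hz => hmemgen z hz
    have hFd : ∀ z ∈ (ball (0:ℂ) R \ closedBall (0:ℂ) 1) \ (∅ : Set ℂ),
        DifferentiableAt ℂ F z := by
      intro z hz
      have h1z : 1 < ‖z‖ := by
        rw [habs]
        exact not_le.mp (fun h => hz.1.2 (mem_closedBall_zero_iff.mpr h))
      have hz0 : z ≠ 0 := by
        intro h0; rw [h0] at h1z; simp at h1z; linarith
      exact (differentiableAt_inv hz0).smul (hgd z h1z)
    have hann : (∮ z in C(0, R), F z) = ∮ z in C(0, 1), F z :=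
      Complex.circleIntegral_eq_of_differentiable_on_annulus_off_countable one_pos hR1
        Set.countable_empty hFc hFd
    -- split the integral over the big circle
    have hgci : ContinuousOn g (sphere (0:ℂ) R) := by
      apply hgc.mono
      intro z hz
      have := hsphere z hz
      simp only [Set.mem_setOf_eq, this]
      exact hR1
    have hFi : CircleIntegrable F 0 R := by
      apply ContinuousOn.circleIntegrable hR0.le
      exact ((continuousOn_id.inv₀ (fun z hz => hzne z hz)).smul hgci)
    have hci : CircleIntegrable (fun z : ℂ => z⁻¹ • c) 0 R := by
      apply ContinuousOn.circleIntegrable hR0.le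
      exact ((continuousOn_id.inv₀ (fun z hz => hzne z hz)).smul continuousOn_const)
    have hconst : (∮ z in C(0, R), z⁻¹ • c) = (2 * Real.pi * I : ℂ) • c := by
      have h1 : (∮ z in C(0, R), (z - 0)⁻¹ • c) = (∮ z in C(0, R), (z - 0)⁻¹) • c :=
        circleIntegral.integral_smul_const _ c 0 R
      have h2 : (∮ z in C(0, R), (z - 0)⁻¹) = 2 * Real.pi * I :=
        circleIntegral.integral_sub_inv_of_mem_ball (by simpa using hR0)
      have := h1.trans (by rw [h2])
      simp only [sub_zero] at this
      rw [this, smul_eq_mul]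
    have hsplit : (∮ z in C(0, R), (z⁻¹ • (g z - c)))
        = (∮ z in C(0, R), F z) - (2 * Real.pi * I : ℂ) • c := by
      rw [← hconst, ← circleIntegral.integral_sub hFi hci]
      apply circleIntegral.integral_congr hR0.le
      intro z _
      simp [F, smul_sub, mul_sub, smul_eq_mul]
    have hbound : ‖∮ z in C(0, R), (z⁻¹ • (g z - c))‖ ≤ 2 * Real.pi * R * (ε / R) := by
      apply circleIntegral.norm_integral_le_of_norm_le_const hR0.le
      intro z hz
      have hzR := hsphere z hz
      have : ‖g z - c‖ ≤ ε := by
        have := hR₀ R (le_max_right _ _) z hzR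
        rw [dist_eq_norm] at this
        exact this.le
      rw [norm_smul, norm_inv, ← habs, hzR]
      rw [div_eq_inv_mul]
      exact mul_le_mul_of_nonneg_left this (by positivity)
    -- combine
    have hcomb : (2 * Real.pi * I : ℂ) • f 0 - (2 * Real.pi * I : ℂ) • c
        = ∮ z in C(0, R), (z⁻¹ • (g z - c)) := by
      rw [hsplit, hann, ← h2, h1]
    have hfin : ‖(2 * Real.pi * I : ℂ) • (f 0 - c)‖ ≤ 2 * Real.pi * ε := by
      rw [smul_sub, hcomb]
      calc ‖∮ z in C(0, R), (z⁻¹ • (g z - c))‖ ≤ 2 * Real.pi * R * (ε / R) := hbound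
        _ = 2 * Real.pi * ε := by
            field_simp
    have hnorm : ‖(2 * Real.pi * I : ℂ)‖ = 2 * Real.pi := by
      simp [norm_mul, Complex.norm_I, Complex.norm_real, Real.norm_eq_abs,
        _root_.abs_of_nonneg Real.pi_nonneg]
    rw [norm_smul, hnorm] at hfin
    have hπ : 0 < 2 * Real.pi := by positivity
    exact le_of_mul_le_mul_left hfin hπ
  -- conclude
  have h0 : ‖f 0 - c‖ ≤ 0 := le_of_forall_pos_le_add (fun ε hε => by
    simpa using key ε hε)
  have h1' : ‖f 0 - c‖ = 0 := le_antisymm h0 (norm_nonneg _)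
  rwa [norm_sub_eq_zero_iff] at h1'


lemma entry_mul_inv {N : ℕ} (A B : Matrix (Fin N) (Fin N) ℂ) (i j : Fin N) :
    (B * A⁻¹) i j = (A.det)⁻¹ * ((B * A.adjugate) i j) := by
  rw [Matrix.inv_def, Ring.inverse_eq_inv, Matrix.mul_smul, Matrix.smul_apply, smul_eq_mul]

set_option maxHeartbeats 1600000 in
lemma one_side {n : ℕ} {v ap am bp bm : ℂ → Matrix (Fin n) (Fin n) ℂ}
    {ha hb : Matrix (Fin n) (Fin n) ℂ} {k l : Fin n → ℤ}
    (hfa : IsRHFactorization n v ap am ha k)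
    (hfb : IsRHFactorization n v bp bm hb l) :
    ∀ p : Fin n, l p ≤ k p := by
  obtain ⟨hak, hapc, hapd, hapdet, hamc, hamd, hamdet, haml, hau, hav⟩ := hfa
  obtain ⟨hbk, hbpc, hbpd, hbpdet, hbmc, hbmd, hbmdet, hbml, hbu, hbv⟩ := hfb
  by_contra hcon
  push_neg at hcon
  obtain ⟨p, hp⟩ := hcon
  have hadet : ha.det ≠ 0 :=
    isUnit_iff_ne_zero.mp ((Matrix.isUnit_iff_isUnit_det ha).mp hau)
  have hbdet : hb.det ≠ 0 :=
    isUnit_iff_ne_zero.mp ((Matrix.isUnit_iff_isUnit_det hb).mp hbu)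
  set H : Matrix (Fin n) (Fin n) ℂ := hb * ha⁻¹ with hH
  have hHdet : H.det ≠ 0 := by
    rw [hH, Matrix.det_mul, Matrix.det_nonsing_inv, Ring.inverse_eq_inv]
    exact mul_ne_zero hbdet (inv_ne_zero hadet)
  apply hHdet
  apply det_eq_zero_of_block H p
  intro i j hip hpj
  have hlk : k j < l i := lt_of_le_of_lt (hak hpj) (lt_of_lt_of_le hp (hbk hip))
  set m : ℕ := (l i - k j).toNat with hm
  have hmz : (m : ℤ) = l i - k j := Int.toNat_of_nonneg (by omega)
  have hmpos : m ≠ 0 := by omega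
  set ψ : ℂ → ℂ := fun z => ((ap z).det)⁻¹ * ((bp z * (ap z).adjugate) i j) with hψ
  set g : ℂ → ℂ := fun z => ((am z).det)⁻¹ * ((bm z * (am z).adjugate) i j) with hg
  set f : ℂ → ℂ := fun z => z ^ m * ψ z with hf
  -- continuity of the product-entry as a function of the pair of matrices
  have hmulc : Continuous (fun pq : (Matrix (Fin n) (Fin n) ℂ) × (Matrix (Fin n) (Fin n) ℂ) =>
      (pq.1 * pq.2.adjugate) i j) :=
    ((continuous_apply j).comp (continuous_apply i)).comp
      (continuous_fst.matrix_mul continuous_snd.matrix_adjugate)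
  -- entrywise hypotheses
  have hψc : ContinuousOn ψ {z : ℂ | ‖z‖ ≤ 1} := by
    apply ContinuousOn.mul
    · exact ((continuous_id.matrix_det).comp_continuousOn hapc).inv₀ fun z hz => hapdet z hz
    · exact hmulc.comp_continuousOn (hbpc.prodMk hapc)
  have hgcont : ContinuousOn g {z : ℂ | 1 ≤ ‖z‖} := by
    apply ContinuousOn.mul
    · exact ((continuous_id.matrix_det).comp_continuousOn hamc).inv₀ fun z hz => hamdet z hz
    · exact hmulc.comp_continuousOn (hbmc.prodMk hamc)
  have hψd : DifferentiableOn ℂ ψ {z : ℂ | ‖z‖ < 1} := by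
    apply DifferentiableOn.mul
    · apply DifferentiableOn.inv (diffOn_det hapd)
      exact fun z hz => hapdet z (le_of_lt hz)
    · have hrw : (fun z => (bp z * (ap z).adjugate) i j)
          = fun z => ∑ t, bp z i t * (ap z).adjugate t j := by
        funext z; rw [Matrix.mul_apply]
      rw [hrw]
      exact DifferentiableOn.fun_sum fun t _ => (hbpd i t).mul (diffOn_adj hapd t j)
  have hgdiff : DifferentiableOn ℂ g {z : ℂ | 1 < ‖z‖} := by
    apply DifferentiableOn.mul
    · apply DifferentiableOn.inv (diffOn_det hamd)
      exact fun z hz => hamdet z (le_of_lt hz)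
    · have hrw : (fun z => (bm z * (am z).adjugate) i j)
          = fun z => ∑ t, bm z i t * (am z).adjugate t j := by
        funext z; rw [Matrix.mul_apply]
      rw [hrw]
      exact DifferentiableOn.fun_sum fun t _ => (hbmd i t).mul (diffOn_adj hamd t j)
  have hball : Metric.ball (0:ℂ) 1 = {z : ℂ | ‖z‖ < 1} := by
    ext z; simp [Metric.mem_ball, Complex.dist_eq]
  have hcball : Metric.closedBall (0:ℂ) 1 = {z : ℂ | ‖z‖ ≤ 1} := by
    ext z; simp [Metric.mem_closedBall, Complex.dist_eq]
  have hfDC : DiffContOnCl ℂ f (Metric.ball (0:ℂ) 1) := by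
    constructor
    · rw [hball]
      exact ((differentiable_id.pow m).differentiableOn).mul hψd
    · rw [closure_ball (0:ℂ) one_ne_zero, hcball]
      exact (continuous_pow m).continuousOn.mul hψc
  have hopen : IsOpen {z : ℂ | 1 < ‖z‖} :=
    isOpen_lt continuous_const continuous_norm
  have hgd : ∀ z : ℂ, 1 < ‖z‖ → DifferentiableAt ℂ g z := fun z hz =>
    (hgdiff z hz).differentiableAt (hopen.mem_nhds hz)
  set c : ℂ := (ha.det)⁻¹ * ((hb * ha.adjugate) i j) with hc
  have hgl : Tendsto g (Filter.comap (fun z : ℂ => ‖z‖) Filter.atTop) (nhds c) := by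
    have htd : Tendsto (fun z => (am z).det) (Filter.comap (fun z : ℂ => ‖z‖) Filter.atTop)
        (nhds ha.det) := ((continuous_id.matrix_det).tendsto ha).comp haml
    have hte : Tendsto (fun z => (bm z * (am z).adjugate) i j)
        (Filter.comap (fun z : ℂ => ‖z‖) Filter.atTop) (nhds ((hb * ha.adjugate) i j)) :=
      (hmulc.tendsto (hb, ha)).comp (hbml.prodMk_nhds haml)
    exact (htd.inv₀ hadet).mul hte
  have heq : ∀ z : ℂ, ‖z‖ = 1 → f z = g z := by
    intro z hz
    have hz0 : z ≠ 0 := by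
      intro h0; rw [h0, norm_zero] at hz; exact one_ne_zero hz.symm
    have hzle : ‖z‖ ≤ 1 := le_of_eq hz
    have hzge : (1:ℝ) ≤ ‖z‖ := le_of_eq hz.symm
    have hapu : IsUnit (ap z).det := isUnit_iff_ne_zero.mpr (hapdet z hzle)
    have hamu : IsUnit (am z).det := isUnit_iff_ne_zero.mpr (hamdet z hzge)
    have hbmu : IsUnit (bm z).det := isUnit_iff_ne_zero.mpr (hbmdet z hzge)
    set Dk : Matrix (Fin n) (Fin n) ℂ := Matrix.diagonal (fun t => z ^ (k t)) with hDk
    set Dl : Matrix (Fin n) (Fin n) ℂ := Matrix.diagonal (fun t => z ^ (l t)) with hDl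
    have e1 : (am z)⁻¹ * Dk * ap z = (bm z)⁻¹ * Dl * bp z := (hav z hz).symm.trans (hbv z hz)
    have hapinv : ap z * (ap z)⁻¹ = 1 := Matrix.mul_nonsing_inv _ hapu
    have hbminv : bm z * (bm z)⁻¹ = 1 := Matrix.mul_nonsing_inv _ hbmu
    have key : bm z * (am z)⁻¹ * Dk = Dl * (bp z * (ap z)⁻¹) := by
      have e2 := congrArg (fun M => bm z * M * (ap z)⁻¹) e1
      simp only [Matrix.mul_assoc] at e2
      rw [hapinv, Matrix.mul_one] at e2
      rw [← Matrix.mul_assoc (bm z) (bm z)⁻¹, hbminv, Matrix.one_mul] at e2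
      rw [Matrix.mul_assoc]
      exact e2
    have ekey := congrArg (fun M => M i j) key
    rw [Matrix.mul_diagonal, Matrix.diagonal_mul] at ekey
    -- ekey : (bm z * (am z)⁻¹) i j * z ^ k j = z ^ l i * (bp z * (ap z)⁻¹) i j
    have hgval : g z = (bm z * (am z)⁻¹) i j := (entry_mul_inv (am z) (bm z) i j).symm
    have hψval : ψ z = (bp z * (ap z)⁻¹) i j := (entry_mul_inv (ap z) (bp z) i j).symm
    show z ^ m * ψ z = g z
    rw [hgval, hψval]
    apply mul_right_cancel₀ (zpow_ne_zero (k j) hz0)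
    calc z ^ m * (bp z * (ap z)⁻¹) i j * z ^ (k j)
        = (z ^ ((l i) - k j) * z ^ (k j)) * (bp z * (ap z)⁻¹) i j := by
          rw [← zpow_natCast z m, hmz]; ring
      _ = z ^ (l i) * (bp z * (ap z)⁻¹) i j := by
          rw [← zpow_add₀ hz0, show l i - k j + k j = l i by omega]
      _ = (bm z * (am z)⁻¹) i j * z ^ (k j) := ekey.symm
  have hf0 : f 0 = c :=
    glue_zero f g c hfDC hgcont hgd hgl heq
  have hf00 : f 0 = 0 := by
    rw [hf]
    simp [zero_pow hmpos]
  rw [hH, entry_mul_inv, ← hc, ← hf0, hf00]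


theorem partial_indices_unique
    (n : ℕ) (v : ℂ → Matrix (Fin n) (Fin n) ℂ)
    (ap am bp bm : ℂ → Matrix (Fin n) (Fin n) ℂ)
    (ha hb : Matrix (Fin n) (Fin n) ℂ)
    (k l : Fin n → ℤ)
    (hfa : IsRHFactorization n v ap am ha k)
    (hfb : IsRHFactorization n v bp bm hb l) :
    ∀ i : Fin n, k i = l i := by
  intro i
  have h1 := one_side hfa hfb i
  have h2 := one_side hfb hfa i
  omega
end
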